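/- Let ν ≥ 1 be a real number and let (X_n)_{n≥1} be a sequence of real-valued random variables such that u_k^ν and v_k^ν are integrable for every k ≥ 0. Let (b_n)_{n≥1} be a nondecreasing unbounded sequence of positive real numbers. If Σ_{k=1}^∞ ( E[u_k^ν] + E[v_k^ν] − E[u_{k−1}^ν] − E[v_{k−1}^ν] ) / b_k^ν < ∞, then S_n/b_n → 0 almost surely as n → ∞. -/

import Mathlib

open MeasureTheory Filter

/-- Kronecker-type lemma for nonnegative terms. -/
lemma kron_aux (w c d : ℕ → ℝ) (hw : ∀ k, 0 ≤ w k)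
    (hc0 : ∀ k, 0 < c k)
    (hcd : ∀ k n, k < n → c k ≤ d n)
    (hd_top : Tendsto d atTop atTop)
    (hs : Summable (fun k => w k / c k)) :
    Tendsto (fun n => (∑ k ∈ Finset.range n, w k) / d n) atTop (nhds 0) := by
  rw [Metric.tendsto_atTop]
  intro ε hε
  set p : ℕ → ℝ := fun n => ∑ k ∈ Finset.range n, w k / c k with hp
  have hptend : Tendsto p atTop (nhds (∑' k, w k / c k)) := hs.hasSum.tendsto_sum_nat
  rw [Metric.tendsto_atTop] at hptend
  obtain ⟨N₀, hN₀⟩ := hptend (ε / 4) (by positivity)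
  set C := ∑ k ∈ Finset.range N₀, w k with hCdef
  have hC : 0 ≤ C := Finset.sum_nonneg fun k _ => hw k
  obtain ⟨N₁, hN₁⟩ := eventually_atTop.mp (hd_top.eventually_ge_atTop (2 * C / ε + 1))
  refine ⟨max N₀ N₁, fun n hn => ?_⟩
  have hnN₀ : N₀ ≤ n := le_trans (le_max_left _ _) hn
  have hnN₁ : N₁ ≤ n := le_trans (le_max_right _ _) hn
  have hdn' : 2 * C / ε + 1 ≤ d n := hN₁ n hnN₁
  have hdn : 0 < d n := lt_of_lt_of_le (by positivity) hdn'
  have hsum_nn : 0 ≤ ∑ k ∈ Finset.range n, w k := Finset.sum_nonneg fun k _ => hw k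
  rw [Real.dist_eq, sub_zero, abs_of_nonneg (div_nonneg hsum_nn hdn.le)]
  have hsplit : ∑ k ∈ Finset.range n, w k = C + ∑ k ∈ Finset.Ico N₀ n, w k := by
    rw [hCdef, Finset.sum_range_add_sum_Ico _ hnN₀]
  have h2 : ∑ k ∈ Finset.Ico N₀ n, (w k / d n) ≤ ∑ k ∈ Finset.Ico N₀ n, (w k / c k) := by
    apply Finset.sum_le_sum
    intro k hk
    have hk' : k < n := (Finset.mem_Ico.mp hk).2
    gcongr
    · exact hw k
    · exact hc0 k
    · exact hcd k n hk'
  have h3 : ∑ k ∈ Finset.Ico N₀ n, (w k / c k) = p n - p N₀ := by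
    have := Finset.sum_range_add_sum_Ico (fun k => w k / c k) hnN₀
    rw [hp]
    linarith [this]
  have h4 : p n - p N₀ < ε / 2 := by
    have h5 := hN₀ n hnN₀
    have h6 := hN₀ N₀ le_rfl
    rw [Real.dist_eq] at h5 h6
    have h5' := abs_lt.mp h5
    have h6' := abs_lt.mp h6
    cases h5' with
    | intro h5a h5b => cases h6' with
      | intro h6a h6b => linarith
  have hCdn : C / d n < ε / 2 := by
    have hkey : 2 * C < ε * d n := by
      have : ε * (2 * C / ε + 1) = 2 * C + ε := by field_simp
      nlinarith
    rw [div_lt_iff₀ hdn]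
    linarith
  have h2' : (∑ k ∈ Finset.Ico N₀ n, w k) / d n ≤ ∑ k ∈ Finset.Ico N₀ n, (w k / c k) := by
    rw [Finset.sum_div]; exact h2
  calc (∑ k ∈ Finset.range n, w k) / d n
      = C / d n + (∑ k ∈ Finset.Ico N₀ n, w k) / d n := by rw [hsplit, add_div]
    _ ≤ C / d n + ∑ k ∈ Finset.Ico N₀ n, (w k / c k) := by linarith
    _ = C / d n + (p n - p N₀) := by rw [h3]
    _ < ε / 2 + ε / 2 := by linarith
    _ = ε := by ring

/-- If nonnegative integrable functions have summable integrals, then they are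
a.e. summable. -/
lemma ae_summable_of_summable_integral {Ω : Type*} [MeasurableSpace Ω] {μ : Measure Ω}
    {g : ℕ → Ω → ℝ} (hint : ∀ k, Integrable (g k) μ) (hnn : ∀ k ω, 0 ≤ g k ω)
    (hsum : Summable fun k => ∫ ω, g k ω ∂μ) :
    ∀ᵐ ω ∂μ, Summable fun k => g k ω := by
  have hmeas : ∀ k, AEMeasurable (fun ω => (‖g k ω‖₊ : ENNReal)) μ := fun k =>
    (hint k).aestronglyMeasurable.enorm
  have hf' : ∑' k, ∫⁻ ω, (‖g k ω‖₊ : ENNReal) ∂μ ≠ ⊤ := by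
    have heq : ∀ k, ∫⁻ ω, (‖g k ω‖₊ : ENNReal) ∂μ = ENNReal.ofReal (∫ ω, g k ω ∂μ) := by
      intro k
      rw [ofReal_integral_eq_lintegral_ofReal (hint k) (Filter.Eventually.of_forall (hnn k))]
      apply lintegral_congr
      intro ω
      exact Real.enorm_eq_ofReal (hnn k ω)
    rw [funext heq, ← ENNReal.ofReal_tsum_of_nonneg (fun k => integral_nonneg (hnn k)) hsum]
    exact ENNReal.ofReal_ne_top
  rw [← lintegral_tsum hmeas] at hf'
  refine (ae_lt_top' (AEMeasurable.ennreal_tsum hmeas) hf').mono ?_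
  intro ω hω
  have := ENNReal.tsum_coe_ne_top_iff_summable_coe.mp hω.ne
  refine this.of_norm.congr fun k => ?_
  simp [Real.norm_eq_abs, abs_of_nonneg (hnn k ω)]

/-- **Strong law of large numbers for arbitrary random variables with `φ(x) = |x|^ν`,
`ν ≥ 1`.** Here `S n = Σ_{i=1}^n X_i`, `u n = Σ_{i=1}^n X_i⁺`, `v n = Σ_{i=1}^n X_i⁻`,
and `x ^ ν` denotes the real power `Real.rpow`. -/
theorem slln_arbitrary_random_variables_pow
    {Ω : Type*} [MeasurableSpace Ω] (μ : Measure Ω) [IsProbabilityMeasure μ]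
    (X S u v : ℕ → Ω → ℝ)
    (hXmeas : ∀ i, 1 ≤ i → Measurable (X i))
    (hS : ∀ k ω, S k ω = ∑ i ∈ Finset.Icc 1 k, X i ω)
    (hu : ∀ k ω, u k ω = ∑ i ∈ Finset.Icc 1 k, max (X i ω) 0)
    (hv : ∀ k ω, v k ω = ∑ i ∈ Finset.Icc 1 k, max (-(X i ω)) 0)
    (ν : ℝ) (hν : 1 ≤ ν)
    (hu_int : ∀ k, Integrable (fun ω => u k ω ^ ν) μ)
    (hv_int : ∀ k, Integrable (fun ω => v k ω ^ ν) μ)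
    (b : ℕ → ℝ)
    (hb_pos : ∀ n, 1 ≤ n → 0 < b n)
    (hb_mono : ∀ n, 1 ≤ n → b n ≤ b (n + 1))
    (hb_top : Tendsto b atTop atTop)
    (h_sum : Summable (fun k : ℕ =>
        ((∫ ω, u (k + 1) ω ^ ν ∂μ) + (∫ ω, v (k + 1) ω ^ ν ∂μ)
          - (∫ ω, u k ω ^ ν ∂μ) - (∫ ω, v k ω ^ ν ∂μ)) / b (k + 1) ^ ν)) :
    ∀ᵐ ω ∂μ, Tendsto (fun n => S n ω / b n) atTop (nhds 0) := by
  have hν0 : (0 : ℝ) < ν := lt_of_lt_of_le one_pos hν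
  -- basic pointwise facts
  have hu_nonneg : ∀ k ω, 0 ≤ u k ω := fun k ω => by
    rw [hu k ω]; exact Finset.sum_nonneg fun i _ => le_max_right _ _
  have hv_nonneg : ∀ k ω, 0 ≤ v k ω := fun k ω => by
    rw [hv k ω]; exact Finset.sum_nonneg fun i _ => le_max_right _ _
  have hu_mono : ∀ k ω, u k ω ≤ u (k + 1) ω := fun k ω => by
    rw [hu k ω, hu (k + 1) ω]
    exact Finset.sum_le_sum_of_subset_of_nonneg
      (Finset.Icc_subset_Icc_right (Nat.le_succ k)) (fun i _ _ => le_max_right _ _)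
  have hv_mono : ∀ k ω, v k ω ≤ v (k + 1) ω := fun k ω => by
    rw [hv k ω, hv (k + 1) ω]
    exact Finset.sum_le_sum_of_subset_of_nonneg
      (Finset.Icc_subset_Icc_right (Nat.le_succ k)) (fun i _ _ => le_max_right _ _)
  -- W, w, g
  set W : ℕ → Ω → ℝ := fun k ω => u k ω ^ ν + v k ω ^ ν with hWdef
  have hW0 : ∀ ω, W 0 ω = 0 := by
    intro ω
    have hu0 : u 0 ω = 0 := by rw [hu 0 ω]; simp
    have hv0 : v 0 ω = 0 := by rw [hv 0 ω]; simp
    simp [hWdef, hu0, hv0, Real.zero_rpow hν0.ne']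
  have hWmono : ∀ k ω, W k ω ≤ W (k + 1) ω := fun k ω => by
    have h1 := Real.rpow_le_rpow (hu_nonneg k ω) (hu_mono k ω) hν0.le
    have h2 := Real.rpow_le_rpow (hv_nonneg k ω) (hv_mono k ω) hν0.le
    simp only [hWdef]; linarith
  set g : ℕ → Ω → ℝ := fun k ω => (W (k + 1) ω - W k ω) / b (k + 1) ^ ν with hgdef
  have hbk : ∀ k : ℕ, (0 : ℝ) < b (k + 1) ^ ν := fun k =>
    Real.rpow_pos_of_pos (hb_pos (k + 1) (Nat.succ_le_succ (Nat.zero_le k))) ν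
  have hg_nonneg : ∀ k ω, 0 ≤ g k ω := fun k ω =>
    div_nonneg (by linarith [hWmono k ω]) (hbk k).le
  have hW_int : ∀ k, Integrable (fun ω => W k ω) μ := fun k => (hu_int k).add (hv_int k)
  have hg_int : ∀ k, Integrable (g k) μ := fun k =>
    ((hW_int (k + 1)).sub (hW_int k)).div_const _
  have hg_sum : Summable fun k => ∫ ω, g k ω ∂μ := by
    refine h_sum.congr fun k => ?_
    rw [hgdef]
    simp only
    rw [integral_div, integral_sub (hW_int (k + 1)) (hW_int k),
      integral_add (hu_int (k + 1)) (hv_int (k + 1)), integral_add (hu_int k) (hv_int k)]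
    ring
  -- a.e. summability
  have hae := ae_summable_of_summable_integral hg_int hg_nonneg hg_sum
  filter_upwards [hae] with ω hω
  -- monotonicity of b from index 1
  have hb_mono' : ∀ m n : ℕ, 1 ≤ m → m ≤ n → b m ≤ b n := by
    intro m n hm hmn
    induction n, hmn using Nat.le_induction with
    | base => exact le_rfl
    | succ n hmn ih => exact le_trans ih (hb_mono n (le_trans hm hmn))
  -- Kronecker step
  have hW_tend : Tendsto (fun n => W n ω / b n ^ ν) atTop (nhds 0) := by
    have hkr := kron_aux (fun k => W (k + 1) ω - W k ω) (fun k => b (k + 1) ^ ν)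
      (fun n => b n ^ ν) (fun k => sub_nonneg.mpr (hWmono k ω)) hbk
      (fun k n hkn => Real.rpow_le_rpow (hb_pos (k + 1) (Nat.succ_le_succ (Nat.zero_le k))).le
        (hb_mono' (k + 1) n (Nat.succ_le_succ (Nat.zero_le k)) hkn) hν0.le)
      ((tendsto_rpow_atTop hν0).comp hb_top) hω
    refine hkr.congr fun n => ?_
    rw [Finset.sum_range_sub (fun k => W k ω), hW0 ω, sub_zero]
  -- (u+v)/b tends to 0
  have ht_nonneg : ∀ᶠ n in atTop, 0 ≤ (u n ω + v n ω) / b n := by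
    filter_upwards [eventually_ge_atTop 1] with n hn
    exact div_nonneg (add_nonneg (hu_nonneg n ω) (hv_nonneg n ω)) (hb_pos n hn).le
  have ht_pow_le : ∀ᶠ n in atTop,
      ((u n ω + v n ω) / b n) ^ ν ≤ 2 ^ ν * (W n ω / b n ^ ν) := by
    filter_upwards [eventually_ge_atTop 1] with n hn
    have hbn := hb_pos n hn
    have huv : 0 ≤ u n ω + v n ω := add_nonneg (hu_nonneg n ω) (hv_nonneg n ω)
    rw [Real.div_rpow huv hbn.le, mul_div_assoc']
    have hnum : (u n ω + v n ω) ^ ν ≤ 2 ^ ν * W n ω := by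
      have h1 : u n ω + v n ω ≤ 2 * max (u n ω) (v n ω) := by
        rcases le_total (u n ω) (v n ω) with h | h
        · rw [max_eq_right h]; linarith
        · rw [max_eq_left h]; linarith
      have h2 : (u n ω + v n ω) ^ ν ≤ (2 * max (u n ω) (v n ω)) ^ ν :=
        Real.rpow_le_rpow huv h1 hν0.le
      have hmax_nn : 0 ≤ max (u n ω) (v n ω) := le_trans (hu_nonneg n ω) (le_max_left _ _)
      have h3 : (2 * max (u n ω) (v n ω)) ^ ν = 2 ^ ν * (max (u n ω) (v n ω)) ^ ν :=
        Real.mul_rpow (by norm_num) hmax_nn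
      have h4 : (max (u n ω) (v n ω)) ^ ν ≤ W n ω := by
        rcases le_total (u n ω) (v n ω) with h | h
        · rw [max_eq_right h]
          simp only [hWdef]
          have := Real.rpow_nonneg (hu_nonneg n ω) ν
          linarith
        · rw [max_eq_left h]
          simp only [hWdef]
          have := Real.rpow_nonneg (hv_nonneg n ω) ν
          linarith
      have h2pos : (0 : ℝ) ≤ 2 ^ ν := Real.rpow_nonneg (by norm_num) ν
      calc (u n ω + v n ω) ^ ν ≤ 2 ^ ν * (max (u n ω) (v n ω)) ^ ν := by rw [← h3]; exact h2
        _ ≤ 2 ^ ν * W n ω := by nlinarith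
    exact div_le_div_of_nonneg_right hnum (Real.rpow_pos_of_pos hbn ν).le
  have ht_pow_tend : Tendsto (fun n => ((u n ω + v n ω) / b n) ^ ν) atTop (nhds 0) := by
    have hlim : Tendsto (fun n => 2 ^ ν * (W n ω / b n ^ ν)) atTop (nhds 0) := by
      have := hW_tend.const_mul ((2 : ℝ) ^ ν)
      simpa using this
    have hpow_nonneg : ∀ᶠ n in atTop, 0 ≤ ((u n ω + v n ω) / b n) ^ ν := by
      filter_upwards [ht_nonneg] with n hn
      exact Real.rpow_nonneg hn ν
    exact squeeze_zero' hpow_nonneg ht_pow_le hlim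
  have ht_tend : Tendsto (fun n => (u n ω + v n ω) / b n) atTop (nhds 0) := by
    have h1 : Tendsto (fun n => (((u n ω + v n ω) / b n) ^ ν) ^ ν⁻¹) atTop
        (nhds ((0 : ℝ) ^ ν⁻¹)) :=
      ht_pow_tend.rpow_const (Or.inr (by positivity))
    rw [Real.zero_rpow (inv_ne_zero hν0.ne')] at h1
    refine Tendsto.congr' ?_ h1
    filter_upwards [ht_nonneg] with n hn
    exact Real.rpow_rpow_inv hn hν0.ne'
  -- conclude for S
  refine squeeze_zero_norm' ?_ ht_tend
  filter_upwards [eventually_ge_atTop 1] with n hn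
  have hbn := hb_pos n hn
  have hSuv : S n ω = u n ω - v n ω := by
    rw [hS n ω, hu n ω, hv n ω, ← Finset.sum_sub_distrib]
    apply Finset.sum_congr rfl
    intro i _
    rcases le_total (X i ω) 0 with h | h
    · rw [max_eq_right h, max_eq_left (by linarith)]; ring
    · rw [max_eq_left h, max_eq_right (by linarith)]; ring
  have habs : |S n ω| ≤ u n ω + v n ω := by
    rw [hSuv]
    rw [abs_le]
    constructor
    · linarith [hu_nonneg n ω]
    · linarith [hv_nonneg n ω]
  rw [Real.norm_eq_abs, abs_div, abs_of_pos hbn]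
  exact div_le_div_of_nonneg_right habs hbn.le
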